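/- The least eigenvalue E₀ of H satisfies E₀ ≤ ω₋, and for every unit eigenvector Ψ₀ of H with eigenvalue E₀, the weight of Ψ₀ outside the line spanned by v obeys 1 − |⟨v, Ψ₀⟩|² ≤ 4b²/((ω₊ − ω₋)² + 4b²). -/

import Mathlib

open Complex

private lemma aux_rayleigh {V : Type*} [NormedAddCommGroup V] [InnerProductSpace ℂ V]
    [FiniteDimensional ℂ V]
    (H : V →ₗ[ℂ] V) (hH : H.IsSymmetric) (E₀ : ℝ)
    (hE₀min : ∀ E : ℂ, Module.End.HasEigenvalue H E → E₀ ≤ E.re)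
    (w : V) (hw : ‖w‖ = 1) : E₀ ≤ ((inner ℂ w (H w) : ℂ)).re := by
  set B := hH.eigenvectorBasis (n := Module.finrank ℂ V) rfl with hB
  set μ := hH.eigenvalues (n := Module.finrank ℂ V) rfl with hμ
  have key : (inner ℂ w (H w) : ℂ)
      = ((∑ i, μ i * Complex.normSq (inner ℂ w (B i)) : ℝ) : ℂ) := by
    rw [← B.sum_inner_mul_inner w (H w)]
    push_cast
    refine Finset.sum_congr rfl fun i _ => ?_
    have h1 : (inner ℂ (B i) (H w) : ℂ) = (μ i : ℂ) * inner ℂ (B i) w := by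
      rw [← hH (B i) w, hH.apply_eigenvectorBasis, inner_smul_left, RCLike.conj_ofReal]; rfl
    have h2 : (inner ℂ (B i) w : ℂ) = starRingEnd ℂ (inner ℂ w (B i)) :=
      (inner_conj_symm _ _).symm
    rw [h1, h2, mul_left_comm, Complex.mul_conj]
  have hre : ((inner ℂ w (H w) : ℂ)).re = ∑ i, μ i * Complex.normSq (inner ℂ w (B i)) := by
    rw [key, Complex.ofReal_re]
  have hww : (inner ℂ w w : ℂ) = 1 := by
    rw [inner_self_eq_norm_sq_to_K, hw]; norm_num
  have hsum : ∑ i, Complex.normSq (inner ℂ w (B i)) = 1 := by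
    have h3 := B.sum_inner_mul_inner w w
    rw [hww] at h3
    have h4 : ((∑ i, Complex.normSq (inner ℂ w (B i)) : ℝ) : ℂ) = 1 := by
      rw [← h3]; push_cast
      refine Finset.sum_congr rfl fun i _ => ?_
      rw [show (inner ℂ (B i) w : ℂ) = starRingEnd ℂ (inner ℂ w (B i)) from
        (inner_conj_symm _ _).symm, Complex.mul_conj]
    exact_mod_cast h4
  calc E₀ = ∑ i, E₀ * Complex.normSq (inner ℂ w (B i)) := by
        rw [← Finset.mul_sum, hsum, mul_one]
    _ ≤ ∑ i, μ i * Complex.normSq (inner ℂ w (B i)) := by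
        refine Finset.sum_le_sum fun i _ => ?_
        have h := hE₀min (μ i) (hH.hasEigenvalue_eigenvalues rfl i)
        rw [Complex.ofReal_re] at h
        exact mul_le_mul_of_nonneg_right h (Complex.normSq_nonneg _)
    _ = _ := hre.symm

theorem ground_state_weight_bound
    {V : Type*} [NormedAddCommGroup V] [InnerProductSpace ℂ V] [FiniteDimensional ℂ V]
    (H : V →ₗ[ℂ] V) (hH : H.IsSymmetric)
    (v : V) (hv : ‖v‖ = 1)
    (ωm ωp b : ℝ) (hω : ωm < ωp) (hb : 0 ≤ b)
    (hdiag : (inner ℂ v (H v) : ℂ) = (ωm : ℂ))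
    (hperp : ∀ φ : V, (inner ℂ v φ : ℂ) = 0 → ωp * ‖φ‖ ^ 2 ≤ ((inner ℂ φ (H φ) : ℂ)).re)
    (hoff : ∀ φ : V, (inner ℂ v φ : ℂ) = 0 → ‖(inner ℂ v (H φ) : ℂ)‖ ≤ b * ‖φ‖)
    (E₀ : ℝ) (hE₀ : Module.End.HasEigenvalue H (E₀ : ℂ))
    (hE₀min : ∀ E : ℂ, Module.End.HasEigenvalue H E → E₀ ≤ E.re) :
    E₀ ≤ ωm ∧
    ∀ Ψ₀ : V, ‖Ψ₀‖ = 1 → H Ψ₀ = (E₀ : ℂ) • Ψ₀ →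
      1 - ‖(inner ℂ v Ψ₀ : ℂ)‖ ^ 2 ≤ 4 * b ^ 2 / ((ωp - ωm) ^ 2 + 4 * b ^ 2) := by
  have hvv : (inner ℂ v v : ℂ) = 1 := by
    rw [inner_self_eq_norm_sq_to_K, hv]; norm_num
  have part1 : E₀ ≤ ωm := by
    have h := aux_rayleigh H hH E₀ hE₀min v hv
    rwa [hdiag, Complex.ofReal_re] at h
  refine ⟨part1, fun Ψ₀ hΨn hΨe => ?_⟩
  set α : ℂ := inner ℂ v Ψ₀ with hα
  set φ : V := Ψ₀ - α • v with hφ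
  have hvφ : (inner ℂ v φ : ℂ) = 0 := by
    simp [hφ, inner_sub_right, inner_smul_right, hvv, hv, hα]
  have hΨ : Ψ₀ = α • v + φ := by rw [hφ]; abel
  have hnorm : ‖α‖ ^ 2 + ‖φ‖ ^ 2 = 1 := by
    have h1 : ‖α • v + φ‖ ^ 2 = ‖α • v‖ ^ 2 + 2 * ((inner ℂ (α • v) φ : ℂ)).re + ‖φ‖ ^ 2 :=
      norm_add_sq (𝕜 := ℂ) _ _
    have h2 : (inner ℂ (α • v) φ : ℂ) = 0 := by
      rw [inner_smul_left, hvφ, mul_zero]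
    rw [h2] at h1
    have h3 : ‖α • v‖ = ‖α‖ := by
      rw [norm_smul, hv, mul_one]
    rw [h3] at h1
    simp only [Complex.zero_re, mul_zero, add_zero] at h1
    rw [← hΨ, hΨn] at h1
    linarith [h1]
  -- E₀ as expectation value
  have hE : (E₀ : ℝ) = ((inner ℂ Ψ₀ (H Ψ₀) : ℂ)).re := by
    rw [hΨe, inner_smul_right, inner_self_eq_norm_sq_to_K, hΨn]
    norm_num
  -- expand
  set z : ℂ := inner ℂ v (H φ) with hz
  have hsym : (inner ℂ φ (H v) : ℂ) = starRingEnd ℂ z := by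
    rw [hz, ← hH φ v, ← inner_conj_symm]
  have hexp : (inner ℂ Ψ₀ (H Ψ₀) : ℂ)
      = Complex.normSq α * (ωm : ℂ) + starRingEnd ℂ α * z + α * starRingEnd ℂ z
        + inner ℂ φ (H φ) := by
    conv_lhs => rw [hΨ]
    rw [map_add, map_smul, inner_add_left, inner_add_right, inner_add_right,
      inner_smul_left, inner_smul_right, inner_smul_right, inner_smul_left,
      hdiag, hsym, hz]
    have hnsq : (starRingEnd ℂ) α * (α * (ωm : ℂ)) = (Complex.normSq α : ℂ) * ωm := by
      rw [← mul_assoc, mul_comm ((starRingEnd ℂ) α) α, Complex.mul_conj]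
    rw [hnsq]; ring
  have hzb : ‖z‖ ≤ b * ‖φ‖ := hoff φ hvφ
  have hcross : -(2 * ‖α‖ * (b * ‖φ‖)) ≤ (starRingEnd ℂ α * z + α * starRingEnd ℂ z).re := by
    have h1 : (starRingEnd ℂ α * z + α * starRingEnd ℂ z) = 2 * (starRingEnd ℂ α * z).re := by
      have : α * starRingEnd ℂ z = starRingEnd ℂ (starRingEnd ℂ α * z) := by
        rw [map_mul, Complex.conj_conj]
      rw [this, Complex.add_conj]; push_cast; ring
    rw [h1]
    have h2 : |(starRingEnd ℂ α * z).re| ≤ ‖starRingEnd ℂ α * z‖ :=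
      Complex.abs_re_le_norm _
    have h3 : ‖starRingEnd ℂ α * z‖ = ‖α‖ * ‖z‖ := by
      rw [norm_mul, Complex.norm_conj]
    have h4 : ‖α‖ * ‖z‖ ≤ ‖α‖ * (b * ‖φ‖) :=
      mul_le_mul_of_nonneg_left hzb (norm_nonneg _)
    have h5 : -(‖α‖ * (b * ‖φ‖)) ≤ (starRingEnd ℂ α * z).re := by
      nlinarith [abs_le.mp h2, h3]
    have h6 : ((2 : ℂ) * ((starRingEnd ℂ α * z).re : ℂ)).re = 2 * (starRingEnd ℂ α * z).re := by
      simp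
    rw [h6]
    linarith
  have hperp' := hperp φ hvφ
  set a := ‖α‖ with ha
  set f := ‖φ‖ with hf
  have hkey : ωm ≥ a ^ 2 * ωm - 2 * a * (b * f) + ωp * f ^ 2 := by
    have h1 : E₀ = (Complex.normSq α * (ωm : ℂ)).re + (starRingEnd ℂ α * z + α * starRingEnd ℂ z).re
        + ((inner ℂ φ (H φ) : ℂ)).re := by
      rw [hE, hexp]; simp [Complex.add_re]; ring
    have h2 : ((Complex.normSq α : ℂ) * (ωm : ℂ)).re = a ^ 2 * ωm := by
      rw [← Complex.ofReal_mul, Complex.ofReal_re, ← Complex.sq_norm]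
    rw [h2] at h1
    linarith [part1, hcross, hperp', h1]
  have ha0 : 0 ≤ a := norm_nonneg _
  have hf0 : 0 ≤ f := norm_nonneg _
  have hgoal : 1 - a ^ 2 = f ^ 2 := by linarith
  rw [hgoal]
  have hΔ : 0 < ωp - ωm := by linarith
  have hden : 0 < (ωp - ωm) ^ 2 + 4 * b ^ 2 := by positivity
  rw [le_div_iff₀ hden]
  rcases eq_or_lt_of_le hf0 with h0 | hfpos
  · rw [← h0]; norm_num; positivity
  · have hfd : f * (ωp - ωm) ≤ 2 * (a * b) := by
      have hsub : a ^ 2 = 1 - f ^ 2 := by linarith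
      rw [hsub] at hkey
      have h6 : f * (f * (ωp - ωm)) ≤ f * (2 * (a * b)) := by nlinarith [hkey]
      exact le_of_mul_le_mul_left h6 hfpos
    nlinarith [mul_self_le_mul_self (by positivity : (0:ℝ) ≤ f * (ωp - ωm)) hfd, hnorm,
      sq_nonneg f, sq_nonneg b]
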